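/- For any unit vector x in a complex Hilbert space and a bounded linear operator S, for r ≥ 1 and α ∈ [0,1]: |⟨Sx,x⟩|^{2r} ≤ ⟨(α|S|^{2r} + (1−α)|S*|^{2r})x, x⟩. -/

import Mathlib

open scoped InnerProductSpace

variable {H : Type*} [NormedAddCommGroup H] [InnerProductSpace ℂ H] [CompleteSpace H]

noncomputable def opAbs (S : H →L[ℂ] H) : H →L[ℂ] H :=
  CFC.sqrt (ContinuousLinearMap.adjoint S * S)

open scoped NNReal

private lemma re_smul_inner (d : ℝ) (y x : H) :
    (⟪(d : ℝ) • y, x⟫_ℂ).re = d * (⟪y, x⟫_ℂ).re := by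
  rw [RCLike.real_smul_eq_coe_smul (K := ℂ), inner_smul_left]
  simp

private lemma inner_re_mono {T T' : H →L[ℂ] H} (h : T ≤ T') (x : H) :
    (⟪T x, x⟫_ℂ).re ≤ (⟪T' x, x⟫_ℂ).re := by
  have h2 := ((ContinuousLinearMap.le_def T T').mp h).inner_nonneg_left x
  simp only [ContinuousLinearMap.sub_apply, inner_sub_left, map_sub, RCLike.re_to_complex] at h2
  have h3 := (Complex.le_def.mp h2).1
  simp only [Complex.zero_re, Complex.sub_re] at h3
  linarith

private lemma tangent_line {t a r : ℝ} (ht : 0 ≤ t) (ha : 0 ≤ a) (hr : 1 ≤ r) :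
    a ^ r + r * a ^ (r - 1) * (t - a) ≤ t ^ r := by
  rcases ha.eq_or_lt with h0 | hpos
  · rcases hr.eq_or_lt with hr1 | hr1
    · rw [← h0, ← hr1]
      simp [Real.rpow_one]
    · rw [← h0, Real.zero_rpow (by linarith : r ≠ 0),
        Real.zero_rpow (by linarith : r - 1 ≠ 0)]
      simpa using Real.rpow_nonneg ht r
  · have ha0 : a ≠ 0 := hpos.ne'
    have hs : (-1 : ℝ) ≤ t / a - 1 := by
      have : 0 ≤ t / a := div_nonneg ht ha
      linarith
    have hb := one_add_mul_self_le_rpow_one_add hs hr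
    rw [show 1 + (t / a - 1) = t / a by ring] at hb
    have hb2 := mul_le_mul_of_nonneg_right hb (Real.rpow_nonneg ha r)
    have hda : (t / a) ^ r * a ^ r = t ^ r := by
      rw [← Real.mul_rpow (div_nonneg ht ha) ha, div_mul_cancel₀ _ ha0]
    have har : a ^ r = a ^ (r - 1) * a := by
      rw [← Real.rpow_add_one ha0 (r - 1)]
      ring_nf
    calc a ^ r + r * a ^ (r - 1) * (t - a)
        = (1 + r * (t / a - 1)) * a ^ r := by
          rw [har]; field_simp
      _ ≤ (t / a) ^ r * a ^ r := hb2
      _ = t ^ r := hda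

private lemma holder_mccarthy (A : H →L[ℂ] H) (hA : 0 ≤ A) (x : H) (hx : ‖x‖ = 1)
    {r : ℝ} (hr : 1 ≤ r) :
    (⟪A x, x⟫_ℂ).re ^ r ≤ (⟪CFC.rpow A r x, x⟫_ℂ).re := by
  have hsa : IsSelfAdjoint A := IsSelfAdjoint.of_nonneg hA
  set a : ℝ := (⟪A x, x⟫_ℂ).re with ha_def
  have ha : 0 ≤ a := by
    have := ((ContinuousLinearMap.nonneg_iff_isPositive A).mp hA).inner_nonneg_left x
    exact (Complex.le_def.mp this).1
  have hrpow : CFC.rpow A r = cfc (fun t : ℝ => ((t.toNNReal ^ r : ℝ≥0) : ℝ)) A := by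
    rw [CFC.rpow_eq_pow, CFC.rpow_def, cfc_nnreal_eq_real _ A hA]
  have hr0 : (0 : ℝ) ≤ r := le_trans zero_le_one hr
  have hcont2 : Continuous (fun t : ℝ => ((t.toNNReal ^ r : ℝ≥0) : ℝ)) :=
    NNReal.continuous_coe.comp ((NNReal.continuous_rpow_const hr0).comp continuous_real_toNNReal)
  have hmono : cfc (fun t : ℝ => (a ^ r - r * a ^ (r - 1) * a) + r * a ^ (r - 1) * t) A
      ≤ cfc (fun t : ℝ => ((t.toNNReal ^ r : ℝ≥0) : ℝ)) A := by
    apply cfc_mono ?_ (by fun_prop) hcont2.continuousOn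
    intro t htsp
    have ht : 0 ≤ t := spectrum_nonneg_of_nonneg hA htsp
    have hco : ((t.toNNReal ^ r : ℝ≥0) : ℝ) = t ^ r := by
      rw [NNReal.coe_rpow, Real.coe_toNNReal _ ht]
    rw [hco]
    have := tangent_line ht ha hr
    linarith
  have haffine : cfc (fun t : ℝ => (a ^ r - r * a ^ (r - 1) * a) + r * a ^ (r - 1) * t) A
      = algebraMap ℝ (H →L[ℂ] H) (a ^ r - r * a ^ (r - 1) * a) + (r * a ^ (r - 1)) • A := by
    rw [cfc_add .., cfc_const .., cfc_const_mul .., cfc_id' ℝ A]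
  have hle := inner_re_mono ((haffine ▸ hmono).trans_eq hrpow.symm) x
  have hcomp : (⟪(algebraMap ℝ (H →L[ℂ] H) (a ^ r - r * a ^ (r - 1) * a)
      + (r * a ^ (r - 1)) • A) x, x⟫_ℂ).re = a ^ r := by
    rw [ContinuousLinearMap.add_apply, inner_add_left, Complex.add_re,
      ContinuousLinearMap.smul_apply, re_smul_inner]
    have h1 : ((algebraMap ℝ (H →L[ℂ] H) (a ^ r - r * a ^ (r - 1) * a)) x)
        = (a ^ r - r * a ^ (r - 1) * a) • x := by
      simp [Algebra.algebraMap_eq_smul_one]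
    rw [h1, re_smul_inner]
    have hxx : (⟪x, x⟫_ℂ).re = 1 := by
      simp [inner_self_eq_norm_sq_to_K, hx]
    rw [hxx, ← ha_def]
    ring
  rw [hcomp] at hle
  exact hle

private lemma rpow_two_mul_sqrt (A : H →L[ℂ] H) (hA : 0 ≤ A) {r : ℝ} (hr : 1 ≤ r) :
    CFC.rpow (CFC.sqrt A) (2 * r) = CFC.rpow A r := by
  have h := CFC.rpow_sqrt_nnreal (a := A) (x := ⟨2 * r, by linarith⟩) hA
  rw [CFC.rpow_eq_pow, CFC.rpow_eq_pow]
  convert h using 2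
  · rfl
  · show r = 2 * r / 2; ring

private lemma inner_adj_mul (S : H →L[ℂ] H) (x : H) :
    (⟪(ContinuousLinearMap.adjoint S * S) x, x⟫_ℂ).re = ‖S x‖ ^ 2 := by
  rw [ContinuousLinearMap.mul_apply, ContinuousLinearMap.adjoint_inner_left]
  simp only [inner_self_eq_norm_sq_to_K]
  norm_cast

theorem inner_rpow_bound (S : H →L[ℂ] H) (x : H) (hx : ‖x‖ = 1)
    (α r : ℝ) (hα : α ∈ Set.Icc (0 : ℝ) 1) (hr : 1 ≤ r) :
    ‖(⟪S x, x⟫_ℂ : ℂ)‖ ^ (2 * r) ≤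
      (⟪(α • CFC.rpow (opAbs S) (2 * r)
        + (1 - α) • CFC.rpow (opAbs (ContinuousLinearMap.adjoint S)) (2 * r)) x, x⟫_ℂ : ℂ).re := by
  obtain ⟨hα0, hα1⟩ := hα
  have hr0 : (0 : ℝ) ≤ r := le_trans zero_le_one hr
  set A : H →L[ℂ] H := ContinuousLinearMap.adjoint S * S with hAdef
  set B : H →L[ℂ] H := S * ContinuousLinearMap.adjoint S with hBdef
  have hA : 0 ≤ A := by
    rw [hAdef, ← ContinuousLinearMap.star_eq_adjoint]; exact star_mul_self_nonneg S
  have hB : 0 ≤ B := by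
    rw [hBdef, ← ContinuousLinearMap.star_eq_adjoint]; exact mul_star_self_nonneg S
  have hPA : CFC.rpow (opAbs S) (2 * r) = CFC.rpow A r := by
    rw [opAbs]; exact rpow_two_mul_sqrt A hA hr
  have hPB : CFC.rpow (opAbs (ContinuousLinearMap.adjoint S)) (2 * r) = CFC.rpow B r := by
    rw [opAbs, ContinuousLinearMap.adjoint_adjoint]; exact rpow_two_mul_sqrt B hB hr
  have haSx : (⟪A x, x⟫_ℂ).re = ‖S x‖ ^ 2 := inner_adj_mul S x
  have hbSx : (⟪B x, x⟫_ℂ).re = ‖ContinuousLinearMap.adjoint S x‖ ^ 2 := by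
    have := inner_adj_mul (ContinuousLinearMap.adjoint S) x
    rwa [ContinuousLinearMap.adjoint_adjoint] at this
  set c : ℝ := ‖(⟪S x, x⟫_ℂ : ℂ)‖ with hc_def
  have hc : 0 ≤ c := norm_nonneg _
  have key1 : c ≤ ‖S x‖ := by
    calc c ≤ ‖S x‖ * ‖x‖ := norm_inner_le_norm _ _
      _ = ‖S x‖ := by rw [hx, mul_one]
  have key2 : c ≤ ‖ContinuousLinearMap.adjoint S x‖ := by
    have hsym : c = ‖(⟪ContinuousLinearMap.adjoint S x, x⟫_ℂ : ℂ)‖ := by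
      rw [hc_def, ContinuousLinearMap.adjoint_inner_left, norm_inner_symm]
    calc c = ‖(⟪ContinuousLinearMap.adjoint S x, x⟫_ℂ : ℂ)‖ := hsym
      _ ≤ ‖ContinuousLinearMap.adjoint S x‖ * ‖x‖ := norm_inner_le_norm _ _
      _ = ‖ContinuousLinearMap.adjoint S x‖ := by rw [hx, mul_one]
  set u : ℝ := (⟪CFC.rpow A r x, x⟫_ℂ).re with hu_def
  set v : ℝ := (⟪CFC.rpow B r x, x⟫_ℂ).re with hv_def
  have hu : (‖S x‖ ^ 2) ^ r ≤ u := by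
    have := holder_mccarthy A hA x hx hr
    rwa [haSx] at this
  have hv : (‖ContinuousLinearMap.adjoint S x‖ ^ 2) ^ r ≤ v := by
    have := holder_mccarthy B hB x hx hr
    rwa [hbSx] at this
  set t : ℝ := (c ^ 2) ^ r with ht_def
  have htnn : 0 ≤ t := Real.rpow_nonneg (sq_nonneg c) r
  have htu : t ≤ u := le_trans (Real.rpow_le_rpow (sq_nonneg c)
    (pow_le_pow_left₀ hc key1 2) hr0) hu
  have htv : t ≤ v := le_trans (Real.rpow_le_rpow (sq_nonneg c)
    (pow_le_pow_left₀ hc key2 2) hr0) hv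
  have hunn : 0 ≤ u := le_trans (Real.rpow_nonneg (sq_nonneg _) r) hu
  have hvnn : 0 ≤ v := le_trans (Real.rpow_nonneg (sq_nonneg _) r) hv
  have hlhs : c ^ (2 * r) = t := by
    rw [ht_def, Real.rpow_mul hc, Real.rpow_two]
  have hsplit : t = t ^ α * t ^ (1 - α) := by
    have h := Real.rpow_add' htnn (show α + (1 - α) ≠ 0 by norm_num)
    rw [show α + (1 - α) = 1 by ring, Real.rpow_one] at h
    exact h
  have hmid : t ≤ α * u + (1 - α) * v := by
    calc t = t ^ α * t ^ (1 - α) := hsplit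
      _ ≤ u ^ α * v ^ (1 - α) :=
        mul_le_mul (Real.rpow_le_rpow htnn htu hα0)
          (Real.rpow_le_rpow htnn htv (by linarith))
          (Real.rpow_nonneg htnn _) (Real.rpow_nonneg hunn _)
      _ ≤ α * u + (1 - α) * v :=
        Real.geom_mean_le_arith_mean2_weighted hα0 (by linarith) hunn hvnn (by ring)
  have hrhs : (⟪(α • CFC.rpow (opAbs S) (2 * r)
      + (1 - α) • CFC.rpow (opAbs (ContinuousLinearMap.adjoint S)) (2 * r)) x, x⟫_ℂ : ℂ).re
      = α * u + (1 - α) * v := by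
    rw [hPA, hPB, ContinuousLinearMap.add_apply, inner_add_left, Complex.add_re,
      ContinuousLinearMap.smul_apply, ContinuousLinearMap.smul_apply,
      re_smul_inner, re_smul_inner, ← hu_def, ← hv_def]
  rw [hrhs, hlhs]
  exact hmid
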